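/- Assuming countable choice: a function F : ℕ^ℕ → ℕ is realisable by a Brouwer-operation (i.e., there is γ ∈ K such that for every α there is n with γ(ᾱn) = F(α) + 1) if and only if F is formally continuous (induced by a formal topology map from formal Baire space to the formal natural numbers). -/
import Mathlib


/-- Initial segment of `α` of length `n`. -/
def seg (α : ℕ → ℕ) (n : ℕ) : List ℕ := List.ofFn (fun i : Fin n => α i)

/-- `a` followed by the constant zero sequence. -/
def zext (a : List ℕ) : ℕ → ℕ := fun i => a.getD i 0

/-- Upward closure under extension. -/
def extU (U : Set (List ℕ)) : Set (List ℕ) := {a | ∃ b ∈ U, b <+: a}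

/-- The cover of formal Baire space, generated by η, ζ, ϝ. -/
inductive Cover : List ℕ → Set (List ℕ) → Prop
  | eta {a : List ℕ} {U : Set (List ℕ)} : a ∈ U → Cover a U
  | zeta {a : List ℕ} {U : Set (List ℕ)} (k : ℕ) : Cover a U → Cover (a ++ [k]) U
  | digamma {a : List ℕ} {U : Set (List ℕ)} : (∀ n, Cover (a ++ [n]) U) → Cover a U

/-- A spread: a decidable tree where every node has a child. -/
def IsSpread (T : Set (List ℕ)) : Prop :=
  (∀ a, a ∈ T ∨ a ∉ T) ∧ (∀ a b : List ℕ, a <+: b → b ∈ T → a ∈ T) ∧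
  (∀ a ∈ T, ∃ n, a ++ [n] ∈ T)

/-- A fan: a finitely branching spread. -/
def IsFan (T : Set (List ℕ)) : Prop :=
  IsSpread T ∧ ∀ a ∈ T, ∃ N, ∀ n, a ++ [n] ∈ T → n ≤ N

/-- `α` is a path in the tree `T`. -/
def IsPath (T : Set (List ℕ)) (α : ℕ → ℕ) : Prop := ∀ n, seg α n ∈ T

/-- A c-bar: a c-set barring every sequence. -/
def IsCBar (P : Set (List ℕ)) : Prop :=
  (∃ δ : List ℕ → ℕ, ∀ a, a ∈ P ↔ ∀ b, δ a = δ (a ++ b)) ∧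
  (∀ α : ℕ → ℕ, ∃ n, seg α n ∈ P)

/-- Pointwise continuity for `F : ℕ^ℕ → ℕ`. -/
def PtwiseCts (F : (ℕ → ℕ) → ℕ) : Prop :=
  ∀ α : ℕ → ℕ, ∃ n, ∀ β : ℕ → ℕ, seg β n = seg α n → F β = F α

/-- An inductive subset of ℕ*. -/
def Inductive (Q : Set (List ℕ)) : Prop := ∀ a, (∀ n, a ++ [n] ∈ Q) → a ∈ Q

/-- Preimage of a subset of ℕ under a relation r ⊆ ℕ* × ℕ. -/
def rInv (r : List ℕ → ℕ → Prop) (D : Set ℕ) : Set (List ℕ) := {a | ∃ n ∈ D, r a n}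

/-- Formal topology map from formal Baire space to formal natural numbers. -/
def IsFTopMap (r : List ℕ → ℕ → Prop) : Prop :=
  Cover [] (rInv r Set.univ) ∧
  ∀ n m : ℕ, ∀ a ∈ extU (rInv r {n}) ∩ extU (rInv r {m}),
    Cover a (rInv r {l | l = n ∧ n = m})

/-- `F` is formally continuous: induced by a formal topology map on points. -/
def FormallyCts (F : (ℕ → ℕ) → ℕ) : Prop :=
  ∃ r : List ℕ → ℕ → Prop, IsFTopMap r ∧
    ∀ α : ℕ → ℕ, {n | ∃ k, r (seg α k) n} = {F α}

/-- The class of Brouwer-operations. -/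
inductive IsBrouwerOp : (List ℕ → ℕ) → Prop
  | const (n : ℕ) : IsBrouwerOp (fun _ => n + 1)
  | sup {γ : List ℕ → ℕ} : γ [] = 0 →
      (∀ n, IsBrouwerOp (fun a => γ (n :: a))) → IsBrouwerOp γ

/-- `bar γ`: minimal sequences on which `γ` is positive. -/
def barOf (γ : List ℕ → ℕ) : Set (List ℕ) :=
  {a | 0 < γ a ∧ ∀ b : List ℕ, b <+: a → b ≠ a → γ b = 0}

/-- The set presentation `Cov` of formal Baire space. -/
inductive Cov : List ℕ → Set (List ℕ) → Prop
  | single (a : List ℕ) : Cov a {a}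
  | union {a : List ℕ} {U : ℕ → Set (List ℕ)} :
      (∀ n, Cov (a ++ [n]) (U n)) → Cov a (⋃ n, U n)

section Aux

lemma seg_length (α : ℕ → ℕ) (n : ℕ) : (seg α n).length = n := by
  simp [seg]

lemma prefix_eq_seg {α : ℕ → ℕ} {u : List ℕ} {n : ℕ} (h : u <+: seg α n) :
    u = seg α u.length := by
  have hlen : u.length ≤ n := by
    have := h.length_le; simpa [seg_length] using this
  apply List.ext_getElem (by simp [seg_length])
  intro i h1 h2
  have hi : i < (seg α n).length := by simp [seg_length]; omega
  have := h.getElem h1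
  simp only [seg, List.getElem_ofFn] at this ⊢
  exact this

lemma seg_zext (a : List ℕ) : seg (zext a) a.length = a := by
  apply List.ext_getElem (by simp [seg_length])
  intro i h1 h2
  simp [seg, zext, List.getD_eq_getElem?_getD, List.getElem?_eq_getElem h2]

lemma prefix_zext {u a : List ℕ} (h : u <+: a) : u = seg (zext a) u.length := by
  have : u <+: seg (zext a) a.length := by rw [seg_zext]; exact h
  exact prefix_eq_seg this

lemma coverMono {a : List ℕ} {U V : Set (List ℕ)} (h : Cover a U) (hUV : U ⊆ V) :
    Cover a V := by
  induction h with
  | eta ha => exact .eta (hUV ha)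
  | zeta k _ ih => exact .zeta k (ih hUV)
  | digamma _ ih => exact .digamma (fun n => ih n hUV)

lemma coverShift {a : List ℕ} {U : Set (List ℕ)} (h : Cover a U) (c : List ℕ) :
    Cover (c ++ a) ((fun u => c ++ u) '' U) := by
  induction h with
  | eta ha => exact .eta ⟨_, ha, rfl⟩
  | zeta k _ ih => rw [← List.append_assoc]; exact .zeta k ih
  | digamma _ ih =>
    apply Cover.digamma
    intro n
    rw [List.append_assoc]
    exact ih n

lemma brouwer_cons {γ : List ℕ → ℕ} (h : IsBrouwerOp γ) (k : ℕ) :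
    IsBrouwerOp (fun b => γ (k :: b)) := by
  cases h with
  | const n => exact .const n
  | sup h0 hn => exact hn k

lemma brouwerHered {γ : List ℕ → ℕ} (h : IsBrouwerOp γ) :
    ∀ b c : List ℕ, b <+: c → 0 < γ b → γ c = γ b := by
  induction h with
  | const n => intro b c _ _; rfl
  | sup h0 hn ih =>
    intro b c hbc hb
    match b with
    | [] => rw [h0] at hb; omega
    | x :: b' =>
      obtain ⟨t, rfl⟩ := hbc
      exact ih x b' (b' ++ t) ⟨t, rfl⟩ hb

lemma brouwerBar {γ : List ℕ → ℕ} (h : IsBrouwerOp γ) :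
    ∀ α : ℕ → ℕ, ∃ n, 0 < γ (seg α n) := by
  induction h with
  | const n => intro α; exact ⟨0, Nat.succ_pos n⟩
  | sup h0 hn ih =>
    intro α
    obtain ⟨m, hm⟩ := ih (α 0) (fun i => α (i + 1))
    refine ⟨m + 1, ?_⟩
    have : seg α (m + 1) = α 0 :: seg (fun i => α (i + 1)) m := by
      simp [seg, List.ofFn_succ]
    rw [this]; exact hm

lemma brouwerPosCover {γ : List ℕ → ℕ} (h : IsBrouwerOp γ) :
    Cover [] {a | 0 < γ a} := by
  induction h with
  | const n => exact .eta (by simp)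
  | sup h0 hn ih =>
    apply Cover.digamma
    intro n
    have h1 := coverShift (ih n) [n]
    rw [List.append_nil] at h1
    refine coverMono h1 ?_
    rintro x ⟨u, hu, rfl⟩
    exact hu

lemma coverBrouwer {a : List ℕ} {U : Set (List ℕ)} (h : Cover a U) :
    ∃ γ : List ℕ → ℕ, IsBrouwerOp γ ∧ ∀ b, 0 < γ b → ∃ u ∈ U, u <+: a ++ b := by
  induction h with
  | eta ha =>
    exact ⟨fun _ => 1, .const 0, fun b _ => ⟨_, ha, ⟨b, rfl⟩⟩⟩
  | zeta k _ ih =>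
    obtain ⟨γ, hγ, hb⟩ := ih
    refine ⟨fun b => γ (k :: b), brouwer_cons hγ k, fun b hpos => ?_⟩
    obtain ⟨u, hu, hpre⟩ := hb (k :: b) hpos
    refine ⟨u, hu, ?_⟩
    rwa [List.append_assoc]
  | digamma _ ih =>
    choose γf h1 h2 using ih
    refine ⟨fun b => match b with | [] => 0 | n :: b' => γf n b', ?_, ?_⟩
    · exact .sup rfl (fun n => h1 n)
    · intro b hpos
      match b with
      | [] => exact absurd hpos (lt_irrefl 0)
      | n :: b' =>
        obtain ⟨u, hu, hpre⟩ := h2 n b' hpos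
        refine ⟨u, hu, ?_⟩
        rwa [List.append_assoc] at hpre

lemma brouwerIf {δ : List ℕ → ℕ} (h : IsBrouwerOp δ) :
    ∀ g : List ℕ → ℕ, (∀ a b, 0 < δ a → g (a ++ b) = g a) →
      IsBrouwerOp (fun a => if 0 < δ a then g a + 1 else 0) := by
  induction h with
  | const n =>
    intro g hg
    have : (fun a => if 0 < (fun _ : List ℕ => n + 1) a then g a + 1 else 0)
        = fun _ => g [] + 1 := by
      funext a
      have := hg [] a (Nat.succ_pos n)
      simp only [List.nil_append] at this
      simp [this]
    rw [this]
    exact .const (g [])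
  | sup h0 hn ih =>
    intro g hg
    apply IsBrouwerOp.sup
    · simp [h0]
    · intro n
      exact ih n (fun a => g (n :: a)) (fun a b ha => hg (n :: a) b ha)

end Aux

theorem realisable_iff_formallyCts (F : (ℕ → ℕ) → ℕ) :
    (∃ γ : List ℕ → ℕ, IsBrouwerOp γ ∧ ∀ α : ℕ → ℕ, ∃ n, γ (seg α n) = F α + 1)
      ↔ FormallyCts F := by
  constructor
  · rintro ⟨γ, hγ, hF⟩
    refine ⟨fun a n => γ a = n + 1, ⟨?_, ?_⟩, ?_⟩
    · refine coverMono (brouwerPosCover hγ) ?_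
      intro a ha
      have ha' : 0 < γ a := ha
      exact ⟨γ a - 1, Set.mem_univ _, by omega⟩
    · rintro n m a ⟨⟨b, ⟨n', hn', hb⟩, hba⟩, ⟨c, ⟨m', hm', hc⟩, hca⟩⟩
      have hb' : γ b = n + 1 := by
        have : γ b = n' + 1 := hb
        rw [Set.eq_of_mem_singleton hn'] at this; exact this
      have hc' : γ c = m + 1 := by
        have : γ c = m' + 1 := hc
        rw [Set.eq_of_mem_singleton hm'] at this; exact this
      have hnm : n = m := by
        rcases List.prefix_or_prefix_of_prefix hba hca with hbc | hcb
        · have := brouwerHered hγ b c hbc (by omega)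
          omega
        · have := brouwerHered hγ c b hcb (by omega)
          omega
      have hga : γ a = n + 1 := by
        rw [brouwerHered hγ b a hba (by omega)]; exact hb'
      exact .eta ⟨n, ⟨rfl, hnm⟩, hga⟩
    · intro α
      ext n
      simp only [Set.mem_setOf_eq, Set.mem_singleton_iff]
      constructor
      · rintro ⟨k, hk⟩
        obtain ⟨k', hk'⟩ := hF α
        rcases le_total k k' with hle | hle
        · have hpre : seg α k <+: seg α k' := by
            rw [show seg α k' = seg α (k + (k' - k)) from by rw [Nat.add_sub_cancel' hle]]
            refine ⟨seg (fun i => α (k + i)) (k' - k), ?_⟩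
            apply List.ext_getElem (by simp [seg_length])
            intro i h1 h2
            simp only [seg, List.getElem_append, List.getElem_ofFn, seg_length,
              List.length_ofFn]
            split <;> simp_all
          have := brouwerHered hγ _ _ hpre (by omega)
          rw [hk, hk'] at this; omega
        · have hpre : seg α k' <+: seg α k := by
            rw [show seg α k = seg α (k' + (k - k')) from by rw [Nat.add_sub_cancel' hle]]
            refine ⟨seg (fun i => α (k' + i)) (k - k'), ?_⟩
            apply List.ext_getElem (by simp [seg_length])
            intro i h1 h2
            simp only [seg, List.getElem_append, List.getElem_ofFn, seg_length,
              List.length_ofFn]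
            split <;> simp_all
          have := brouwerHered hγ _ _ hpre (by omega)
          rw [hk, hk'] at this; omega
      · rintro rfl
        exact hF α
  · rintro ⟨r, ⟨h1, h2⟩, hpts⟩
    have hpts1 : ∀ (α : ℕ → ℕ) (n k : ℕ), r (seg α k) n → n = F α := by
      intro α n k h
      have := (Set.ext_iff.1 (hpts α) n).1 ⟨k, h⟩
      exact this
    obtain ⟨γ₀, hγ₀, hbar0⟩ := coverBrouwer h1
    have hval : ∀ a : List ℕ, 0 < γ₀ a → ∀ β : ℕ → ℕ,
        (∀ k, k ≤ a.length → seg β k = seg (zext a) k) → F β = F (zext a) := by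
      intro a ha β hβ
      obtain ⟨u, ⟨m, _, hrm⟩, hua⟩ := hbar0 a ha
      rw [List.nil_append] at hua
      have hu1 : u = seg (zext a) u.length := prefix_zext hua
      have hulen : u.length ≤ a.length := by
        have := hua.length_le; omega
      have hu2 : u = seg β u.length := by rw [hβ u.length hulen]; exact hu1
      have e1 : m = F (zext a) := hpts1 (zext a) m u.length (by rwa [← hu1])
      have e2 : m = F β := hpts1 β m u.length (by rwa [← hu2])
      omega
    have hseg_pref : ∀ (u a : List ℕ), u <+: a → ∀ k, k ≤ u.length →
        seg (zext a) k = seg (zext u) k := by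
      intro u a hu k hk
      apply List.ext_getElem (by simp [seg_length])
      intro i hi1 hi2
      simp only [seg, List.getElem_ofFn, zext]
      have hiu : i < u.length := by
        rw [seg_length] at hi1; omega
      obtain ⟨t, rfl⟩ := hu
      rw [List.getD_append u t 0 i hiu]
    have hconst : ∀ a b : List ℕ, 0 < γ₀ a → F (zext (a ++ b)) = F (zext a) := by
      intro a b ha
      refine hval a ha (zext (a ++ b)) ?_
      intro k hk
      exact hseg_pref a (a ++ b) ⟨b, rfl⟩ k hk
    refine ⟨fun a => if 0 < γ₀ a then F (zext a) + 1 else 0, ?_, ?_⟩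
    · exact brouwerIf hγ₀ (fun a => F (zext a)) hconst
    · intro α
      obtain ⟨n, hn⟩ := brouwerBar hγ₀ α
      refine ⟨n, ?_⟩
      have hFeq : F (zext (seg α n)) = F α := by
        have := hval (seg α n) hn α ?_
        · omega
        · intro k hk
          rw [seg_length] at hk
          apply List.ext_getElem (by simp [seg_length])
          intro i hi1 hi2
          have hik : i < k := by rw [seg_length] at hi1; exact hi1
          simp only [seg, List.getElem_ofFn, zext]
          rw [List.getD_eq_getElem _ 0 (show i < (List.ofFn fun j : Fin n => α ↑j).length by
            simp; omega)]
          simp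
      simp [hn, hFeq]
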